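/- arXiv:2212.01860 — 3 statements merged into one kernel-verified Lean document; each statement's English description precedes it below -/
import Mathlib

section
/- There exists a finite simple graph G and a vertex v of G with deg_G(v) ≥ 2 such that γst(G/v) = γst(G) + 1; that is, the upper bound γst(G/v) ≤ γst(G) + 1 for non-pendant vertices is tight. -/
/-- The degree of a vertex `x` in a graph `G`. -/
noncomputable def sdeg {V : Type*} (G : SimpleGraph V) (x : V) : ℕ :=
  (G.neighborSet x).ncard

/-- `D` is a strong dominating set of `G`: every vertex `x ∉ D` has a neighbor
`y ∈ D` with `deg x ≤ deg y`. -/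
def IsStrongDominating {V : Type*} (G : SimpleGraph V) (D : Set V) : Prop :=
  ∀ x ∉ D, ∃ y ∈ D, G.Adj x y ∧ sdeg G x ≤ sdeg G y

/-- The strong domination number of `G`. -/
noncomputable def sdn {V : Type*} (G : SimpleGraph V) : ℕ :=
  sInf {n | ∃ D : Set V, IsStrongDominating G D ∧ D.ncard = n}

/-- Vertex deletion `G - v`: the induced subgraph on the complement of `{v}`. -/
def delVtx {V : Type*} (G : SimpleGraph V) (v : V) : SimpleGraph {x : V // x ≠ v} where
  Adj a b := G.Adj a.1 b.1
  symm := ⟨fun a b h => G.symm.symm _ _ h⟩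
  loopless := ⟨fun a h => G.loopless.irrefl a.1 h⟩

/-- Vertex contraction `G / v`: delete `v` and put a clique on its open neighborhood. -/
def contractVtx {V : Type*} (G : SimpleGraph V) (v : V) : SimpleGraph {x : V // x ≠ v} where
  Adj a b := a ≠ b ∧ (G.Adj a.1 b.1 ∨ (G.Adj v a.1 ∧ G.Adj v b.1))
  symm := by
    constructor
    rintro a b ⟨hab, h | ⟨ha, hb⟩⟩
    · exact ⟨hab.symm, Or.inl h.symm⟩
    · exact ⟨hab.symm, Or.inr ⟨hb, ha⟩⟩
  loopless := by constructor; rintro a ⟨h, -⟩; exact h rfl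

/-- `G ⊙ v`: remove all edges between any pair of neighbors of `v`. -/
def odotVtx {V : Type*} (G : SimpleGraph V) (v : V) : SimpleGraph V where
  Adj x y := G.Adj x y ∧ ¬(G.Adj v x ∧ G.Adj v y)
  symm := by
    constructor
    rintro x y ⟨h, hn⟩
    exact ⟨h.symm, fun hc => hn ⟨hc.2, hc.1⟩⟩
  loopless := by constructor; rintro x ⟨h, -⟩; exact G.loopless.irrefl x h

/-- Edge contraction `G / uv`: merge `v` into `u`. -/
def contractEdge {V : Type*} (G : SimpleGraph V) (u v : V) : SimpleGraph {x : V // x ≠ v} where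
  Adj a b := a ≠ b ∧ (G.Adj a.1 b.1 ∨ (a.1 = u ∧ G.Adj v b.1) ∨ (b.1 = u ∧ G.Adj v a.1))
  symm := by
    constructor
    rintro a b ⟨hab, h | h | h⟩
    · exact ⟨hab.symm, Or.inl h.symm⟩
    · exact ⟨hab.symm, Or.inr (Or.inr h)⟩
    · exact ⟨hab.symm, Or.inr (Or.inl h)⟩
  loopless := by constructor; rintro a ⟨h, -⟩; exact h rfl

/-- The star `K_{1,n}` with center `none` and leaves `some i`. -/
def starG (n : ℕ) : SimpleGraph (Option (Fin n)) where
  Adj a b := (a = none ∧ b ≠ none) ∨ (a ≠ none ∧ b = none)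
  symm := by
    constructor
    rintro a b (⟨h1, h2⟩ | ⟨h1, h2⟩)
    · exact Or.inr ⟨h2, h1⟩
    · exact Or.inl ⟨h2, h1⟩
  loopless := by
    constructor
    rintro a (⟨h1, h2⟩ | ⟨h1, h2⟩)
    exacts [h2 h1, h1 h2]

/-- The path graph `P_n` on vertices `0, …, n-1`, consecutive integers adjacent. -/
def pathG (n : ℕ) : SimpleGraph (Fin n) where
  Adj i j := i.1 + 1 = j.1 ∨ j.1 + 1 = i.1
  symm := ⟨fun i j h => h.symm⟩
  loopless := by constructor; rintro i (h | h) <;> omega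


-- Auxiliary material

lemma sdeg_eq_degree {V : Type*} [Fintype V] (G : SimpleGraph V) [DecidableRel G.Adj]
    (x : V) : sdeg G x = G.degree x := by
  rw [sdeg, ← SimpleGraph.card_neighborSet_eq_degree, Set.ncard_eq_toFinset_card',
    Set.toFinset_card]

lemma sdn_eq_of {V : Type*} [Fintype V] [DecidableEq V] (G : SimpleGraph V)
    [DecidableRel G.Adj] (k : ℕ)
    (D0 : Finset V)
    (h1 : ∀ x ∉ D0, ∃ y ∈ D0, G.Adj x y ∧ G.degree x ≤ G.degree y)
    (hcard : D0.card = k)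
    (h2 : ∀ D : Finset V, (∀ x ∉ D, ∃ y ∈ D, G.Adj x y ∧ G.degree x ≤ G.degree y) →
      k ≤ D.card) :
    sdn G = k := by
  have hmem : k ∈ {n | ∃ D : Set V, IsStrongDominating G D ∧ D.ncard = n} := by
    refine ⟨(D0 : Set V), ?_, by rw [Set.ncard_coe_finset]; exact hcard⟩
    intro x hx
    obtain ⟨y, hy, hadj, hdeg⟩ := h1 x (by simpa using hx)
    exact ⟨y, by simpa using hy, hadj, by rw [sdeg_eq_degree, sdeg_eq_degree]; exact hdeg⟩
  have hlb : ∀ n ∈ {n | ∃ D : Set V, IsStrongDominating G D ∧ D.ncard = n}, k ≤ n := by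
    rintro n ⟨D, hSD, rfl⟩
    have hfin : D.Finite := D.toFinite
    rw [Set.ncard_eq_toFinset_card D hfin]
    refine h2 hfin.toFinset ?_
    intro x hx
    obtain ⟨y, hy, hadj, hdeg⟩ := hSD x (by simpa [Set.Finite.mem_toFinset] using hx)
    refine ⟨y, by simpa [Set.Finite.mem_toFinset] using hy, hadj, ?_⟩
    rw [sdeg_eq_degree, sdeg_eq_degree] at hdeg; exact hdeg
  refine le_antisymm (Nat.sInf_le hmem) ?_
  exact hlb _ (Nat.sInf_mem ⟨k, hmem⟩)

def myL : List (ℕ × ℕ) := [(0,2),(0,5),(0,6),(1,5),(1,6),(2,3),(2,4),(3,4)]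

def myG : SimpleGraph (Fin 7) where
  Adj i j := (i.1, j.1) ∈ myL ∨ (j.1, i.1) ∈ myL
  symm := ⟨fun i j h => h.symm⟩
  loopless := ⟨by intro i h; fin_cases i <;> revert h <;> decide⟩

instance : DecidableRel myG.Adj := fun i j =>
  inferInstanceAs (Decidable ((i.1, j.1) ∈ myL ∨ (j.1, i.1) ∈ myL))

def c0 : {x : Fin 7 // x ≠ 3} := ⟨0, by decide⟩
def c1 : {x : Fin 7 // x ≠ 3} := ⟨1, by decide⟩
def c2 : {x : Fin 7 // x ≠ 3} := ⟨2, by decide⟩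

instance {V : Type*} [DecidableEq V] (G : SimpleGraph V) [DecidableRel G.Adj] (v : V) :
    DecidableRel (contractVtx G v).Adj := fun a b =>
  inferInstanceAs (Decidable (a ≠ b ∧ (G.Adj a.1 b.1 ∨ (G.Adj v a.1 ∧ G.Adj v b.1))))

set_option maxRecDepth 100000 in
/-- the upper bound γst(G/v) ≤ γst(G) + 1 for non-pendant vertices is tight. -/
theorem sdn_contractVtx_upper_bound_tight :
    ∃ (n : ℕ) (G : SimpleGraph (Fin n)) (v : Fin n),
      2 ≤ sdeg G v ∧ sdn (contractVtx G v) = sdn G + 1 := by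
  refine ⟨7, myG, 3, ?_, ?_⟩
  · rw [sdeg_eq_degree]; decide
  · have h1 : sdn myG = 2 := by
      refine sdn_eq_of myG 2 {1, 2} (by decide) (by decide) (by decide)
    have h2 : sdn (contractVtx myG 3) = 3 := by
      refine sdn_eq_of (contractVtx myG 3) 3
        {c0, c1, c2} (by decide) (by decide) (by decide)
    rw [h1, h2]
end

section
/- Let G be a finite simple graph and let e = uv be an edge of G such that v is a pendant vertex (deg_G(v) = 1). Then γst(G) − 1 ≤ γst(G/e) ≤ γst(G) + deg_G(u) − 1, where G/e is the graph obtained from G by contracting the edge e (merging u and v); since v is pendant, G/e equals G − v. -/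
/-- if e = uv with v pendant, then
γst(G) − 1 ≤ γst(G/e) ≤ γst(G) + deg_G(u) − 1. -/
theorem sdn_contractEdge_pendant {V : Type*} [Fintype V] (G : SimpleGraph V) (u v : V)
    (huv : G.Adj u v) (hv : sdeg G v = 1) :
    (sdn G : ℤ) - 1 ≤ (sdn (contractEdge G u v) : ℤ) ∧
    (sdn (contractEdge G u v) : ℤ) ≤ (sdn G : ℤ) + (sdeg G u : ℤ) - 1 := by
  classical
  set G' := contractEdge G u v with hG'
  have hvu : v ≠ u := fun h => G.loopless.irrefl u (h ▸ huv)
  have hNv : G.neighborSet v = {u} := by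
    obtain ⟨a, ha⟩ := Set.ncard_eq_one.mp hv
    have hu : u ∈ G.neighborSet v := huv.symm
    rw [ha] at hu ⊢
    simp only [Set.mem_singleton_iff] at hu
    rw [hu]
  have hadjv : ∀ x : V, G.Adj v x → x = u := by
    intro x hx
    have : x ∈ G.neighborSet v := hx
    rwa [hNv, Set.mem_singleton_iff] at this
  have hadj : ∀ a b : {x : V // x ≠ v}, G'.Adj a b ↔ G.Adj a.1 b.1 := by
    intro a b
    constructor
    · rintro ⟨hab, h | ⟨hau, hvb⟩ | ⟨hbu, hva⟩⟩
      · exact h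
      · exact absurd (Subtype.ext (hau.trans (hadjv _ hvb).symm)) hab
      · exact absurd (Subtype.ext ((hadjv _ hva).trans hbu.symm)) hab
    · intro h
      exact ⟨fun he => G.loopless.irrefl _ (by rwa [he] at h), Or.inl h⟩
  have himg : ∀ x : {x : V // x ≠ v},
      Subtype.val '' (G'.neighborSet x) = G.neighborSet x.1 \ {v} := by
    intro x
    ext b
    constructor
    · rintro ⟨c, hc, rfl⟩
      exact ⟨(hadj x c).mp hc, c.2⟩
    · rintro ⟨hb, hbv⟩
      exact ⟨⟨b, hbv⟩, (hadj x ⟨b, hbv⟩).mpr hb, rfl⟩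
  have hsdeg : ∀ x : {x : V // x ≠ v}, sdeg G' x = (G.neighborSet x.1 \ {v}).ncard := by
    intro x
    rw [sdeg, ← himg x, Set.ncard_image_of_injective _ Subtype.val_injective]
  have hdeg_eq : ∀ x : {x : V // x ≠ v}, x.1 ≠ u → sdeg G' x = sdeg G x.1 := by
    intro x hx
    rw [hsdeg x, sdeg]
    congr 1
    rw [Set.diff_singleton_eq_self]
    intro hvmem
    exact hx (hadjv _ (G.adj_symm hvmem))
  have hdeg_le : ∀ x : {x : V // x ≠ v}, sdeg G' x ≤ sdeg G x.1 := fun x => by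
    rw [hsdeg x]; exact Set.ncard_le_ncard Set.diff_subset (Set.toFinite _)
  have hune : 0 < sdeg G u := (Set.ncard_pos (Set.toFinite _)).mpr ⟨v, huv⟩
  obtain ⟨D, hD, hDc⟩ : ∃ D : Set V, IsStrongDominating G D ∧ D.ncard = sdn G := by
    have h := Nat.sInf_mem (s := {n | ∃ D : Set V, IsStrongDominating G D ∧ D.ncard = n})
      ⟨_, Set.univ, fun x hx => absurd (Set.mem_univ x) hx, rfl⟩
    exact h
  obtain ⟨D', hD', hD'c⟩ :
      ∃ D : Set {x : V // x ≠ v}, IsStrongDominating G' D ∧ D.ncard = sdn G' := by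
    have h := Nat.sInf_mem
      (s := {n | ∃ D : Set {x : V // x ≠ v}, IsStrongDominating G' D ∧ D.ncard = n})
      ⟨_, Set.univ, fun x hx => absurd (Set.mem_univ x) hx, rfl⟩
    exact h
  have hlow : sdn G ≤ sdn G' + 1 := by
    have hdom : IsStrongDominating G (insert u (Subtype.val '' D')) := by
      intro x hx
      by_cases hxv : x = v
      · subst hxv
        exact ⟨u, Set.mem_insert _ _, huv.symm, by rw [hv]; exact hune⟩
      · have hxu : x ≠ u := fun h => hx (h ▸ Set.mem_insert _ _)
        have hxD' : (⟨x, hxv⟩ : {x : V // x ≠ v}) ∉ D' := fun h =>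
          hx (Set.mem_insert_iff.mpr (Or.inr ⟨_, h, rfl⟩))
        obtain ⟨y, hyD, hyadj, hydeg⟩ := hD' _ hxD'
        refine ⟨y.1, Set.mem_insert_iff.mpr (Or.inr ⟨y, hyD, rfl⟩), (hadj _ _).mp hyadj, ?_⟩
        calc sdeg G x = sdeg G' ⟨x, hxv⟩ := (hdeg_eq ⟨x, hxv⟩ hxu).symm
          _ ≤ sdeg G' y := hydeg
          _ ≤ sdeg G y.1 := hdeg_le y
    have h1 : sdn G ≤ (insert u (Subtype.val '' D')).ncard := Nat.sInf_le ⟨_, hdom, rfl⟩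
    have h2 : (insert u (Subtype.val '' D')).ncard ≤ D'.ncard + 1 := by
      calc (insert u (Subtype.val '' D')).ncard
          ≤ (Subtype.val '' D').ncard + 1 := Set.ncard_insert_le _ _
        _ = D'.ncard + 1 := by rw [Set.ncard_image_of_injective _ Subtype.val_injective]
    omega
  have hup : sdn G' + 1 ≤ sdn G + sdeg G u := by
    set E : Set V := (D \ {v}) ∪ insert u (G.neighborSet u \ {v}) with hE
    have hvE : v ∉ E := by
      simp [hE, hvu]
    have hdomE : IsStrongDominating G' {x : {x : V // x ≠ v} | x.1 ∈ E} := by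
      intro x hx
      have hxE : x.1 ∉ E := hx
      have hxD : x.1 ∉ D := fun h => hxE (Set.mem_union_left _ ⟨h, x.2⟩)
      have hxu : x.1 ≠ u := fun h => hxE (Set.mem_union_right _ (Set.mem_insert_iff.mpr (Or.inl h)))
      have hxnbr : x.1 ∉ G.neighborSet u := fun h =>
        hxE (Set.mem_union_right _ (Set.mem_insert_iff.mpr (Or.inr ⟨h, x.2⟩)))
      obtain ⟨y, hyD, hyadj, hydeg⟩ := hD _ hxD
      have hyv : y ≠ v := fun h => hxu (hadjv _ (G.adj_symm (h ▸ hyadj)))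
      have hyu : y ≠ u := fun h => hxnbr (h ▸ hyadj.symm)
      refine ⟨⟨y, hyv⟩, Set.mem_union_left _ ⟨hyD, hyv⟩, (hadj _ _).mpr hyadj, ?_⟩
      rw [hdeg_eq _ hxu, hdeg_eq ⟨y, hyv⟩ hyu]
      exact hydeg
    have hcardE' : ({x : {x : V // x ≠ v} | x.1 ∈ E}).ncard = E.ncard := by
      have himg2 : Subtype.val '' {x : {x : V // x ≠ v} | x.1 ∈ E} = E := by
        ext b
        constructor
        · rintro ⟨c, hc, rfl⟩; exact hc
        · intro hb; exact ⟨⟨b, fun h => hvE (h ▸ hb)⟩, hb, rfl⟩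
      rw [← Set.ncard_image_of_injective _ Subtype.val_injective, himg2]
    have hnbr : (G.neighborSet u \ {v}).ncard = sdeg G u - 1 :=
      Set.ncard_diff_singleton_of_mem huv
    have h5 : sdn G' ≤ E.ncard := Nat.sInf_le ⟨_, hdomE, hcardE'⟩
    by_cases hvD : v ∈ D
    · have hins : (insert u (G.neighborSet u \ {v})).ncard ≤ sdeg G u := by
        calc (insert u (G.neighborSet u \ {v})).ncard
            ≤ (G.neighborSet u \ {v}).ncard + 1 := Set.ncard_insert_le _ _
          _ ≤ sdeg G u := by rw [hnbr]; omega
      have hunion : E.ncard ≤ (D \ {v}).ncard + (insert u (G.neighborSet u \ {v})).ncard :=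
        Set.ncard_union_le _ _
      have h3 : (D \ {v}).ncard = D.ncard - 1 := Set.ncard_diff_singleton_of_mem hvD
      have h4 : 0 < D.ncard := (Set.ncard_pos (Set.toFinite _)).mpr ⟨v, hvD⟩
      omega
    · have huD : u ∈ D := by
        obtain ⟨y, hyD, hyadj, _⟩ := hD v hvD
        rwa [hadjv _ hyadj] at hyD
      have hsub : E ⊆ D ∪ (G.neighborSet u \ {v}) := by
        rintro x (⟨h, -⟩ | h)
        · exact Or.inl h
        · rcases Set.mem_insert_iff.mp h with rfl | h
          · exact Or.inl huD
          · exact Or.inr h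
      have h6 : E.ncard ≤ D.ncard + (sdeg G u - 1) := by
        calc E.ncard ≤ (D ∪ (G.neighborSet u \ {v})).ncard :=
              Set.ncard_le_ncard hsub (Set.toFinite _)
          _ ≤ D.ncard + (G.neighborSet u \ {v}).ncard := Set.ncard_union_le _ _
          _ = D.ncard + (sdeg G u - 1) := by rw [hnbr]
      omega
  exact ⟨by omega, by omega⟩
end

section
/- Let G be a finite simple graph and v a vertex of G such that deg_G(v) > deg_G(u) for every u ∈ N_G(v). If S is a strong dominating set of the vertex-deleted graph G − v, then S ∪ {v} is a strong dominating set of G; consequently γst(G) ≤ γst(G − v) + 1. -/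
lemma sdeg_del_le {V : Type*} [Fintype V] (G : SimpleGraph V) (v : V)
    (x : {x : V // x ≠ v}) : sdeg (delVtx G v) x ≤ sdeg G x.1 := by
  have h : (Subtype.val '' ((delVtx G v).neighborSet x)).ncard
      = sdeg (delVtx G v) x :=
    Set.ncard_image_of_injective _ Subtype.val_injective
  rw [← h, sdeg]
  apply Set.ncard_le_ncard _ (Set.toFinite _)
  rintro y ⟨z, hz, rfl⟩
  exact hz

lemma sdeg_del_eq {V : Type*} [Fintype V] (G : SimpleGraph V) (v : V)
    (x : {x : V // x ≠ v}) (hx : ¬ G.Adj v x.1) :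
    sdeg (delVtx G v) x = sdeg G x.1 := by
  have h : (Subtype.val '' ((delVtx G v).neighborSet x)).ncard
      = sdeg (delVtx G v) x :=
    Set.ncard_image_of_injective _ Subtype.val_injective
  rw [← h, sdeg]
  congr 1
  ext y
  constructor
  · rintro ⟨z, hz, rfl⟩; exact hz
  · intro hy
    have hyv : y ≠ v := by rintro rfl; exact hx hy.symm
    exact ⟨⟨y, hyv⟩, hy, rfl⟩

lemma key_sd {V : Type*} [Fintype V] (G : SimpleGraph V)
    (v : V) (hv : ∀ u ∈ G.neighborSet v, sdeg G u < sdeg G v)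
    (S : Set {x : V // x ≠ v}) (hS : IsStrongDominating (delVtx G v) S) :
    IsStrongDominating G (Subtype.val '' S ∪ {v}) := by
  intro x hx
  have hxv : x ≠ v := by rintro rfl; exact hx (Or.inr rfl)
  by_cases hadj : G.Adj v x
  · exact ⟨v, Or.inr rfl, hadj.symm, (hv x hadj).le⟩
  · obtain ⟨y, hyS, hyadj, hyd⟩ := hS ⟨x, hxv⟩ (fun h => hx (Or.inl ⟨_, h, rfl⟩))
    refine ⟨y.1, Or.inl ⟨y, hyS, rfl⟩, hyadj, ?_⟩
    calc sdeg G x = sdeg (delVtx G v) ⟨x, hxv⟩ := (sdeg_del_eq G v ⟨x, hxv⟩ hadj).symm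
      _ ≤ sdeg (delVtx G v) y := hyd
      _ ≤ sdeg G y.1 := sdeg_del_le G v y

/-- if deg_G(v) > deg_G(u) for every neighbor u of v and S is a strong
dominating set of G − v, then S ∪ {v} is a strong dominating set of G; consequently
γst(G) ≤ γst(G − v) + 1. -/
theorem strongDominating_insert_of_maxDeg {V : Type*} [Fintype V] (G : SimpleGraph V)
    (v : V) (hv : ∀ u ∈ G.neighborSet v, sdeg G u < sdeg G v)
    (S : Set {x : V // x ≠ v}) (hS : IsStrongDominating (delVtx G v) S) :
    IsStrongDominating G (Subtype.val '' S ∪ {v}) ∧ sdn G ≤ sdn (delVtx G v) + 1 := by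
  refine ⟨key_sd G v hv S hS, ?_⟩
  have hne : {n | ∃ D : Set {x : V // x ≠ v}, IsStrongDominating (delVtx G v) D ∧
      D.ncard = n}.Nonempty := ⟨_, Set.univ, fun x hx => absurd (Set.mem_univ x) hx, rfl⟩
  obtain ⟨D, hD, hDcard⟩ := Nat.sInf_mem hne
  have hsd := key_sd G v hv D hD
  have h1 : sdn G ≤ (Subtype.val '' D ∪ {v}).ncard :=
    Nat.sInf_le ⟨_, hsd, rfl⟩
  refine h1.trans ?_
  calc (Subtype.val '' D ∪ {v}).ncard
      ≤ (Subtype.val '' D).ncard + ({v} : Set V).ncard :=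
        Set.ncard_union_le _ _
    _ = D.ncard + 1 := by
        rw [Set.ncard_image_of_injective _ Subtype.val_injective, Set.ncard_singleton]
    _ = sdn (delVtx G v) + 1 := by rw [hDcard]; rfl
end
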